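/- Let F : ℝ^d → ℝ be differentiable with G-Lipschitz gradient, and let δ > 0. Then the gradients of F and of its δ-ball smoothing F^δ satisfy ‖∇F(x) − ∇F^δ(x)‖ ≤ Gδ for every x ∈ ℝ^d. -/

import Mathlib

open MeasureTheory Metric InnerProductSpace

/-- The uniform probability distribution on the closed unit ball of `ℝ^d`. -/
noncomputable def uniformBall (d : ℕ) : Measure (EuclideanSpace ℝ (Fin d)) :=
  (volume (closedBall (0 : EuclideanSpace ℝ (Fin d)) 1))⁻¹ •
    volume.restrict (closedBall (0 : EuclideanSpace ℝ (Fin d)) 1)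

/-- The `δ`-ball smoothing `F^δ(x) = E_{w∼𝔹}[F(x + δw)]`. -/
noncomputable def ballSmooth {d : ℕ} (F : EuclideanSpace ℝ (Fin d) → ℝ) (δ : ℝ)
    (x : EuclideanSpace ℝ (Fin d)) : ℝ :=
  ∫ w, F (x + δ • w) ∂(uniformBall d)


section aux
variable {d : ℕ}

lemma vol_pos : 0 < volume (closedBall (0 : EuclideanSpace ℝ (Fin d)) 1) :=
  measure_closedBall_pos _ _ one_pos

lemma vol_ne_top : volume (closedBall (0 : EuclideanSpace ℝ (Fin d)) 1) ≠ ⊤ :=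
  (isCompact_closedBall _ _).measure_lt_top.ne

instance : IsProbabilityMeasure (uniformBall d) := by
  constructor
  simp only [uniformBall, Measure.smul_apply, Measure.restrict_apply MeasurableSet.univ,
    Set.univ_inter, smul_eq_mul]
  exact ENNReal.inv_mul_cancel vol_pos.ne' vol_ne_top

lemma ae_mem_ball : ∀ᵐ w ∂(uniformBall d), ‖w‖ ≤ 1 := by
  rw [uniformBall]; refine Measure.ae_smul_measure ?_ _
  filter_upwards [ae_restrict_mem measurableSet_closedBall] with w hw
  simpa [mem_closedBall, dist_eq_norm] using hw

lemma integrable_uniformBall {X : Type*} [NormedAddCommGroup X]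
    {f : EuclideanSpace ℝ (Fin d) → X} (hf : Continuous f) :
    Integrable f (uniformBall d) := by
  rw [uniformBall]
  refine Integrable.smul_measure ?_ (by simp [vol_pos.ne'])
  exact (hf.continuousOn).integrableOn_compact (isCompact_closedBall _ _)

end aux

/-- If `F` is differentiable with `G`-Lipschitz gradient and `δ > 0`, then
`‖∇F(x) − ∇F^δ(x)‖ ≤ Gδ` for every `x`. -/
theorem stmt6 {d : ℕ} (F : EuclideanSpace ℝ (Fin d) → ℝ)
    (hF : Differentiable ℝ F) (G : ℝ) (hG : 0 ≤ G)
    (hGlip : ∀ x y, ‖gradient F x - gradient F y‖ ≤ G * ‖x - y‖)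
    (δ : ℝ) (hδ : 0 < δ) :
    ∀ x, ‖gradient F x - gradient (ballSmooth F δ) x‖ ≤ G * δ := by
  intro x₀
  set g : EuclideanSpace ℝ (Fin d) → EuclideanSpace ℝ (Fin d) := gradient F with hg
  have hgcont : Continuous g := by
    refine (LipschitzWith.of_dist_le_mul (K := G.toNNReal) fun x y => ?_).continuous
    rw [dist_eq_norm]
    calc ‖g x - g y‖ ≤ G * ‖x - y‖ := hGlip x y
    _ = G.toNNReal * dist x y := by rw [Real.coe_toNNReal G hG, dist_eq_norm]
  set L : EuclideanSpace ℝ (Fin d) → (EuclideanSpace ℝ (Fin d) →L[ℝ] ℝ) :=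
    fun y => toDual ℝ _ (g y) with hL
  have hLcont : Continuous L := (toDual ℝ _).continuous.comp hgcont
  have hLF : ∀ y, HasFDerivAt F (L y) y := fun y =>
    ((hF y).hasGradientAt).hasFDerivAt
  -- differentiation under the integral
  have key : HasFDerivAt (ballSmooth F δ) (∫ w, L (x₀ + δ • w) ∂(uniformBall d)) x₀ := by
    refine hasFDerivAt_integral_of_dominated_of_fderiv_le
      (F := fun x w => F (x + δ • w)) (F' := fun x w => L (x + δ • w))
      (bound := fun _ => ‖g x₀‖ + G * (1 + δ)) (ball_mem_nhds x₀ one_pos) ?_ ?_ ?_ ?_ ?_ ?_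
    · filter_upwards with x
      exact (hF.continuous.comp (continuous_const.add (continuous_id.const_smul δ))).aestronglyMeasurable
    · exact integrable_uniformBall (hF.continuous.comp (continuous_const.add (continuous_id.const_smul δ)))
    · exact (hLcont.comp (continuous_const.add (continuous_id.const_smul δ))).aestronglyMeasurable
    · filter_upwards [ae_mem_ball] with w hw x hx
      have h1 : ‖L (x + δ • w)‖ = ‖g (x + δ • w)‖ := (toDual ℝ _).norm_map _
      rw [h1]
      have h2 : ‖g (x + δ • w)‖ ≤ ‖g x₀‖ + G * ‖x + δ • w - x₀‖ := by
        have := hGlip (x + δ • w) x₀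
        have := norm_sub_norm_le (g (x + δ • w)) (g x₀)
        linarith
      have h3 : ‖x + δ • w - x₀‖ ≤ 1 + δ := by
        calc ‖x + δ • w - x₀‖ = ‖(x - x₀) + δ • w‖ := by congr 1; abel
        _ ≤ ‖x - x₀‖ + ‖δ • w‖ := norm_add_le _ _
        _ ≤ 1 + δ := by
            have : ‖x - x₀‖ ≤ 1 := by
              rw [← dist_eq_norm]; exact (mem_ball.mp hx).le
            have : ‖δ • w‖ ≤ δ := by
              rw [norm_smul, Real.norm_of_nonneg hδ.le]
              nlinarith
            linarith [‹‖x - x₀‖ ≤ 1›]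
      nlinarith [h2, h3]
    · exact integrable_const _
    · filter_upwards with w x _
      have := (hLF (x + δ • w)).comp x ((hasFDerivAt_id x).add_const (δ • w))
      simpa [Function.comp_def] using this
  have hint : Integrable (fun w => g (x₀ + δ • w)) (uniformBall d) :=
    integrable_uniformBall (hgcont.comp (continuous_const.add (continuous_id.const_smul δ)))
  have keyg : HasGradientAt (ballSmooth F δ) (∫ w, g (x₀ + δ • w) ∂(uniformBall d)) x₀ := by
    rw [hasGradientAt_iff_hasFDerivAt]
    refine key.congr_fderiv ?_
    exact ((toDual ℝ (EuclideanSpace ℝ (Fin d))).toLinearIsometry.integral_comp_comm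
      (fun w => g (x₀ + δ • w)))
  rw [keyg.gradient]
  have hconst : g x₀ = ∫ _w, g x₀ ∂(uniformBall d) := by
    simp [integral_const]
  rw [hconst, ← integral_sub (integrable_const _) hint]
  refine (norm_integral_le_of_norm_le (integrable_const (G * δ)) ?_).trans (by simp)
  filter_upwards [ae_mem_ball] with w hw
  calc ‖g x₀ - g (x₀ + δ • w)‖ ≤ G * ‖x₀ - (x₀ + δ • w)‖ := hGlip _ _
    _ = G * (δ * ‖w‖) := by
        rw [show x₀ - (x₀ + δ • w) = -(δ • w) by abel, norm_neg, norm_smul,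
          Real.norm_of_nonneg hδ.le]
    _ ≤ G * δ := by nlinarith [mul_nonneg (mul_nonneg hG hδ.le) (sub_nonneg.mpr hw)]
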